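/- Let L and i be non-negative integers, and let h_{L,i}(y,q) = ∑_π (1−y)^{ν⁺_d(π)} · q^{|π|}, where the sum ranges over all sequences π of exactly i non-negative integer parts, each at most L, arranged in non-increasing order, |π| is the sum of the parts, and ν⁺_d(π) is the number of different positive values occurring among the parts of π. Then h_{L,i}(y,q) = ∑_{j ≥ 0} q^{j(j+1)/2}·(−y)^j·[L+i−j choose i]_q·[i choose j]_q, as an identity of polynomials in y and q. -/

import Mathlib

/-!
Statement 10 (Alladi–Berkovich lemma): For non-negative integers `L` and `i`,
`h_{L,i}(y,q) = ∑_π (1−y)^{ν⁺_d(π)} q^{|π|}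
             = ∑_{j ≥ 0} q^{j(j+1)/2} (−y)^j [L+i−j choose i]_q [i choose j]_q`,
where the sum ranges over all non-increasing sequences of exactly `i` parts from
`{0,…,L}` (equivalently, multisets of size `i` with entries at most `L`), `|π|` is the sum
of the parts and `ν⁺_d(π)` is the number of distinct positive values among the parts.
The sum over `j` is finite since `[i choose j]_q = 0` for `j > i`.  The identity is stated
in `ℚ⟦y,q⟧` (both sides are polynomials in `y` and `q`).
-/

/-- The variable `y` in `ℚ⟦y,q⟧`. -/
noncomputable def yv : MvPowerSeries (Fin 2) ℚ := MvPowerSeries.X 0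

/-- The variable `q` in `ℚ⟦y,q⟧`. -/
noncomputable def qv : MvPowerSeries (Fin 2) ℚ := MvPowerSeries.X 1

/-- `(q; q)_N = ∏_{k=0}^{N−1} (1 − q^{k+1})` in `ℚ⟦y,q⟧`. -/
noncomputable def qPoch (N : ℕ) : MvPowerSeries (Fin 2) ℚ :=
  ∏ k ∈ Finset.range N, (1 - qv ^ (k + 1))

/-- The Gaussian binomial coefficient `[a choose b]_q` in `ℚ⟦y,q⟧`, defined as
`(q;q)_a / ((q;q)_b (q;q)_{a−b})` for `a ≥ b ≥ 0` and `0` otherwise. -/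
noncomputable def gauss (a b : ℕ) : MvPowerSeries (Fin 2) ℚ :=
  if b ≤ a then qPoch a * (qPoch b * qPoch (a - b))⁻¹ else 0

lemma constantCoeff_qPoch (N : ℕ) :
    MvPowerSeries.constantCoeff (qPoch N) = 1 := by
  rw [qPoch, map_prod]
  apply Finset.prod_eq_one
  intro k _
  simp [qv, MvPowerSeries.constantCoeff_X]

lemma isUnit_qPoch (N : ℕ) : IsUnit (qPoch N) := by
  rw [MvPowerSeries.isUnit_iff_constantCoeff, constantCoeff_qPoch]
  exact isUnit_one

lemma gauss_mul (b c : ℕ) : gauss (b + c) b * (qPoch b * qPoch c) = qPoch (b + c) := by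
  rw [gauss, if_pos (Nat.le_add_right b c), Nat.add_sub_cancel_left, mul_assoc,
    MvPowerSeries.inv_mul_cancel, mul_one]
  rw [map_mul, constantCoeff_qPoch, constantCoeff_qPoch]
  norm_num

lemma gauss_zero (a : ℕ) : gauss a 0 = 1 := by
  have h0 : qPoch 0 = 1 := by simp [qPoch]
  rw [gauss, if_pos (Nat.zero_le a), Nat.sub_zero, h0, one_mul, MvPowerSeries.mul_inv_cancel]
  rw [constantCoeff_qPoch]; norm_num

lemma gauss_self (a : ℕ) : gauss a a = 1 := by
  rw [gauss, if_pos le_rfl, Nat.sub_self]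
  have : qPoch 0 = 1 := by simp [qPoch]
  rw [this, mul_one, MvPowerSeries.mul_inv_cancel]
  rw [constantCoeff_qPoch]; norm_num

lemma gauss_of_lt {a b : ℕ} (h : a < b) : gauss a b = 0 := by
  rw [gauss, if_neg (by omega)]

lemma qPoch_succ (n : ℕ) : qPoch (n + 1) = qPoch n * (1 - qv ^ (n + 1)) :=
  Finset.prod_range_succ _ _

lemma constQ {a b : ℕ} : MvPowerSeries.constantCoeff (qPoch a * qPoch b) ≠ 0 := by
  rw [map_mul, constantCoeff_qPoch, constantCoeff_qPoch]; norm_num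

lemma pascal1 (b c : ℕ) :
    gauss (b + 1 + c) (b + 1) = gauss (b + c) (b + 1) + qv ^ c * gauss (b + c) b := by
  cases c with
  | zero =>
    simp only [Nat.add_zero, pow_zero, one_mul]
    rw [gauss_self, gauss_of_lt (Nat.lt_succ_self b), gauss_self, zero_add]
  | succ c =>
    refine ((isUnit_qPoch (b + 1)).mul (isUnit_qPoch (c + 1))).mul_right_cancel ?_
    have h1 : gauss (b + c + 2) (b + 1) * (qPoch (b + 1) * qPoch (c + 1))
        = qPoch (b + c + 2) := by
      have := gauss_mul (b + 1) (c + 1)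
      rwa [show b + 1 + (c + 1) = b + c + 2 by ring] at this
    have h2 : gauss (b + c + 1) (b + 1) * (qPoch (b + 1) * qPoch c)
        = qPoch (b + c + 1) := by
      have := gauss_mul (b + 1) c
      rwa [show b + 1 + c = b + c + 1 by ring] at this
    have h3 : gauss (b + c + 1) b * (qPoch b * qPoch (c + 1)) = qPoch (b + c + 1) := by
      have := gauss_mul b (c + 1)
      rwa [show b + (c + 1) = b + c + 1 by ring] at this
    have e1 : qPoch (b + c + 2) = qPoch (b + c + 1) * (1 - qv ^ (b + c + 2)) :=
      qPoch_succ (b + c + 1)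
    have e2 : qPoch (c + 1) = qPoch c * (1 - qv ^ (c + 1)) := qPoch_succ c
    have e3 : qPoch (b + 1) = qPoch b * (1 - qv ^ (b + 1)) := qPoch_succ b
    have e4 : qv ^ (b + c + 2) = qv ^ (c + 1) * qv ^ (b + 1) := by
      rw [← pow_add]; ring_nf
    rw [show b + 1 + (c + 1) = b + c + 2 by ring, show b + (c + 1) = b + c + 1 by ring]
    calc gauss (b + c + 2) (b + 1) * (qPoch (b + 1) * qPoch (c + 1))
        = qPoch (b + c + 2) := h1
      _ = qPoch (b + c + 1) * (1 - qv ^ (b + c + 2)) := e1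
      _ = qPoch (b + c + 1) * (1 - qv ^ (c + 1)) +
            qv ^ (c + 1) * (qPoch (b + c + 1) * (1 - qv ^ (b + 1))) := by rw [e4]; ring
      _ = (gauss (b + c + 1) (b + 1) * (qPoch (b + 1) * qPoch c)) * (1 - qv ^ (c + 1)) +
            qv ^ (c + 1) * ((gauss (b + c + 1) b * (qPoch b * qPoch (c + 1))) *
              (1 - qv ^ (b + 1))) := by rw [h2, h3]
      _ = (gauss (b + c + 1) (b + 1) + qv ^ (c + 1) * gauss (b + c + 1) b) *
            (qPoch (b + 1) * qPoch (c + 1)) := by rw [e2, e3]; ring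

lemma pascal2 (k c : ℕ) :
    gauss (k + 1 + c) (k + 1) = qv ^ (k + 1) * gauss (k + c) (k + 1) + gauss (k + c) k := by
  cases c with
  | zero =>
    simp only [Nat.add_zero]
    rw [gauss_self, gauss_of_lt (Nat.lt_succ_self k), gauss_self, mul_zero, zero_add]
  | succ c =>
    refine ((isUnit_qPoch (k + 1)).mul (isUnit_qPoch (c + 1))).mul_right_cancel ?_
    have h1 : gauss (k + c + 2) (k + 1) * (qPoch (k + 1) * qPoch (c + 1))
        = qPoch (k + c + 2) := by
      have := gauss_mul (k + 1) (c + 1)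
      rwa [show k + 1 + (c + 1) = k + c + 2 by ring] at this
    have h2 : gauss (k + c + 1) (k + 1) * (qPoch (k + 1) * qPoch c)
        = qPoch (k + c + 1) := by
      have := gauss_mul (k + 1) c
      rwa [show k + 1 + c = k + c + 1 by ring] at this
    have h3 : gauss (k + c + 1) k * (qPoch k * qPoch (c + 1)) = qPoch (k + c + 1) := by
      have := gauss_mul k (c + 1)
      rwa [show k + (c + 1) = k + c + 1 by ring] at this
    have e1 : qPoch (k + c + 2) = qPoch (k + c + 1) * (1 - qv ^ (k + c + 2)) :=
      qPoch_succ (k + c + 1)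
    have e2 : qPoch (c + 1) = qPoch c * (1 - qv ^ (c + 1)) := qPoch_succ c
    have e3 : qPoch (k + 1) = qPoch k * (1 - qv ^ (k + 1)) := qPoch_succ k
    have e4 : qv ^ (k + c + 2) = qv ^ (k + 1) * qv ^ (c + 1) := by
      rw [← pow_add]; ring_nf
    rw [show k + 1 + (c + 1) = k + c + 2 by ring, show k + (c + 1) = k + c + 1 by ring]
    calc gauss (k + c + 2) (k + 1) * (qPoch (k + 1) * qPoch (c + 1))
        = qPoch (k + c + 2) := h1
      _ = qPoch (k + c + 1) * (1 - qv ^ (k + c + 2)) := e1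
      _ = qv ^ (k + 1) * (qPoch (k + c + 1) * (1 - qv ^ (c + 1))) +
            qPoch (k + c + 1) * (1 - qv ^ (k + 1)) := by rw [e4]; ring
      _ = qv ^ (k + 1) * ((gauss (k + c + 1) (k + 1) * (qPoch (k + 1) * qPoch c)) *
              (1 - qv ^ (c + 1))) +
            (gauss (k + c + 1) k * (qPoch k * qPoch (c + 1))) * (1 - qv ^ (k + 1)) := by
          rw [h2, h3]
      _ = (qv ^ (k + 1) * gauss (k + c + 1) (k + 1) + gauss (k + c + 1) k) *
            (qPoch (k + 1) * qPoch (c + 1)) := by rw [e2, e3]; ring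

noncomputable def G (L i : ℕ) : MvPowerSeries (Fin 2) ℚ :=
  ∑ j ∈ Finset.range (i + 1),
    qv ^ (j * (j + 1) / 2) * (-yv) ^ j * gauss (L + i - j) i * gauss i j

lemma G_zero_right (L : ℕ) : G L 0 = 1 := by
  rw [G, Finset.sum_range_one]
  norm_num [gauss_zero, gauss_self]

lemma G_zero_left (i : ℕ) : G 0 i = 1 := by
  rw [G, Finset.sum_eq_single 0]
  · norm_num [gauss_zero, gauss_self]
  · intro b hb hb0
    rw [Finset.mem_range] at hb
    rw [gauss_of_lt (a := 0 + i - b) (by omega)]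
    ring
  · intro h
    exact absurd (Finset.mem_range.mpr (by omega)) h

lemma Grec (L i : ℕ) :
    G (L + 1) (i + 1)
      = G L (i + 1) + qv ^ (L + 1) * G (L + 1) i - yv * qv ^ (L + 1) * G L i := by
  have hA : qv ^ (L + 1) * G (L + 1) i
      = ∑ j ∈ Finset.range (i + 1 + 1),
          qv ^ (L + 1) *
            (qv ^ (j * (j + 1) / 2) * (-yv) ^ j * gauss (L + 1 + i - j) i * gauss i j) := by
    rw [Finset.sum_range_succ, gauss_of_lt (Nat.lt_succ_self i), mul_zero, mul_zero, add_zero,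
      G, Finset.mul_sum]
  have hB : yv * qv ^ (L + 1) * G L i
      = ∑ j ∈ Finset.range (i + 1 + 1),
          (if j = 0 then 0 else yv * qv ^ (L + 1) *
            (qv ^ ((j - 1) * j / 2) * (-yv) ^ (j - 1) *
              gauss (L + i - (j - 1)) i * gauss i (j - 1))) := by
    rw [Finset.sum_range_succ']
    simp only [Nat.succ_ne_zero, if_false, Nat.add_sub_cancel, reduceIte, add_zero]
    rw [G, Finset.mul_sum]
  have hG : G L (i + 1) = ∑ j ∈ Finset.range (i + 1 + 1),
      qv ^ (j * (j + 1) / 2) * (-yv) ^ j * gauss (L + (i + 1) - j) (i + 1) * gauss (i + 1) j :=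
    rfl
  have key : ∀ j ∈ Finset.range (i + 1 + 1),
      qv ^ (j * (j + 1) / 2) * (-yv) ^ j * gauss (L + 1 + (i + 1) - j) (i + 1) * gauss (i + 1) j
        = qv ^ (j * (j + 1) / 2) * (-yv) ^ j * gauss (L + (i + 1) - j) (i + 1) * gauss (i + 1) j
          + (qv ^ (L + 1) *
              (qv ^ (j * (j + 1) / 2) * (-yv) ^ j * gauss (L + 1 + i - j) i * gauss i j)
            - (if j = 0 then 0 else yv * qv ^ (L + 1) *
                (qv ^ ((j - 1) * j / 2) * (-yv) ^ (j - 1) *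
                  gauss (L + i - (j - 1)) i * gauss i (j - 1)))) := by
    intro j hj
    rw [Finset.mem_range] at hj
    match j with
    | 0 =>
      rw [if_pos rfl, sub_zero]
      have hp1 : gauss (i + 1 + (L + 1)) (i + 1)
          = gauss (i + (L + 1)) (i + 1) + qv ^ (L + 1) * gauss (i + (L + 1)) i :=
        pascal1 i (L + 1)
      rw [show L + 1 + (i + 1) - 0 = i + 1 + (L + 1) by omega,
        show L + (i + 1) - 0 = i + (L + 1) by omega,
        show L + 1 + i - 0 = i + (L + 1) by omega, hp1]
      norm_num [gauss_zero]
    | k + 1 =>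
      rw [if_neg (Nat.succ_ne_zero k), Nat.add_sub_cancel]
      rcases le_or_gt k L with hk | hk
      · have hp1 : gauss (i + 1 + (L - k)) (i + 1)
            = gauss (i + (L - k)) (i + 1) + qv ^ (L - k) * gauss (i + (L - k)) i :=
          pascal1 i (L - k)
        have hp2 : gauss (i + 1) (k + 1) = qv ^ (k + 1) * gauss i (k + 1) + gauss i k := by
          have := pascal2 k (i - k)
          rwa [show k + 1 + (i - k) = i + 1 by omega, show k + (i - k) = i by omega] at this
        have e5 : qv ^ ((k + 1) * (k + 1 + 1) / 2) = qv ^ (k * (k + 1) / 2) * qv ^ (k + 1) := by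
          rw [← pow_add]
          congr 1
          have h2 : (k + 1) * (k + 1 + 1) = k * (k + 1) + (k + 1) * 2 := by ring
          rw [h2, Nat.add_mul_div_right _ _ (by norm_num : (0:ℕ) < 2)]
        have e6 : qv ^ (L + 1) = qv ^ (L - k) * qv ^ (k + 1) := by
          rw [← pow_add, show L - k + (k + 1) = L + 1 by omega]
        rw [show L + 1 + (i + 1) - (k + 1) = i + 1 + (L - k) by omega,
          show L + (i + 1) - (k + 1) = i + (L - k) by omega,
          show L + 1 + i - (k + 1) = i + (L - k) by omega,
          show L + i - k = i + (L - k) by omega, hp1, hp2, e5, e6, pow_succ (-yv) k]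
        ring
      · rw [gauss_of_lt (a := L + 1 + (i + 1) - (k + 1)) (by omega),
          gauss_of_lt (a := L + (i + 1) - (k + 1)) (by omega),
          gauss_of_lt (a := L + 1 + i - (k + 1)) (b := i) (by omega),
          gauss_of_lt (a := L + i - k) (b := i) (by omega)]
        ring
  calc G (L + 1) (i + 1)
      = ∑ j ∈ Finset.range (i + 1 + 1),
          qv ^ (j * (j + 1) / 2) * (-yv) ^ j * gauss (L + 1 + (i + 1) - j) (i + 1) *
            gauss (i + 1) j := rfl
    _ = ∑ j ∈ Finset.range (i + 1 + 1),
          (qv ^ (j * (j + 1) / 2) * (-yv) ^ j * gauss (L + (i + 1) - j) (i + 1) *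
              gauss (i + 1) j
            + (qv ^ (L + 1) *
                (qv ^ (j * (j + 1) / 2) * (-yv) ^ j * gauss (L + 1 + i - j) i * gauss i j)
              - (if j = 0 then 0 else yv * qv ^ (L + 1) *
                  (qv ^ ((j - 1) * j / 2) * (-yv) ^ (j - 1) *
                    gauss (L + i - (j - 1)) i * gauss i (j - 1))))) :=
        Finset.sum_congr rfl key
    _ = G L (i + 1) + (qv ^ (L + 1) * G (L + 1) i - yv * qv ^ (L + 1) * G L i) := by
        rw [Finset.sum_add_distrib, Finset.sum_sub_distrib, ← hG, ← hA, ← hB]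
    _ = G L (i + 1) + qv ^ (L + 1) * G (L + 1) i - yv * qv ^ (L + 1) * G L i := by ring

noncomputable def w (m : Multiset ℕ) : MvPowerSeries (Fin 2) ℚ :=
  (1 - yv) ^ ((m.toFinset.filter (fun x => 0 < x)).card) * qv ^ m.sum

noncomputable def H (L i : ℕ) : MvPowerSeries (Fin 2) ℚ :=
  ∑ s ∈ (Finset.range (L + 1)).sym i, w (s : Multiset ℕ)

lemma H_zero_right (L : ℕ) : H L 0 = 1 := by
  rw [H, Finset.sym_zero, Finset.sum_singleton]
  have h0 : ((∅ : Sym ℕ 0) : Multiset ℕ) = 0 := rfl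
  rw [h0, w]
  simp

lemma H_zero_left (i : ℕ) : H 0 i = 1 := by
  rw [H]
  simp only [Nat.zero_add, Finset.range_one, Finset.sym_singleton, Finset.sum_singleton]
  rw [Sym.coe_replicate, w]
  rcases Nat.eq_zero_or_pos i with hi | hi
  · subst hi; simp
  · rw [Multiset.toFinset_replicate]
    rw [if_neg (by omega)]
    simp [Finset.filter_singleton, Multiset.sum_replicate]

lemma sym_filter (L i : ℕ) :
    ((Finset.range (L + 1 + 1)).sym i).filter
        (fun s : Sym ℕ i => ¬ (L + 1) ∈ (s : Multiset ℕ))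
      = (Finset.range (L + 1)).sym i := by
  ext s
  simp only [Finset.mem_filter, Finset.mem_sym_iff, Finset.mem_range]
  constructor
  · rintro ⟨h1, h2⟩ a ha
    have h3 := h1 a ha
    have h4 : a ≠ L + 1 := fun h => h2 (h ▸ ha)
    omega
  · intro h
    refine ⟨fun a ha => by have := h a ha; omega, fun hm => by have := h _ hm; omega⟩

lemma H_split (L i : ℕ) :
    H (L + 1) i
      = (∑ s ∈ ((Finset.range (L + 1 + 1)).sym i).filter
            (fun s : Sym ℕ i => (L + 1) ∈ (s : Multiset ℕ)), w (s : Multiset ℕ)) + H L i := by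
  rw [H, H, ← sym_filter L i,
    ← Finset.sum_filter_add_sum_filter_not ((Finset.range (L + 1 + 1)).sym i)
      (fun s : Sym ℕ i => (L + 1) ∈ (s : Multiset ℕ))]

lemma H_cons (L i : ℕ) :
    ∑ s ∈ ((Finset.range (L + 1 + 1)).sym (i + 1)).filter
        (fun s : Sym ℕ (i + 1) => (L + 1) ∈ (s : Multiset ℕ)), w (s : Multiset ℕ)
      = ∑ t ∈ (Finset.range (L + 1 + 1)).sym i, w ((L + 1) ::ₘ (t : Multiset ℕ)) := by
  refine Finset.sum_bij'
    (fun (s : Sym ℕ (i + 1)) hs => s.erase (L + 1) (Finset.mem_filter.mp hs).2)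
    (fun (t : Sym ℕ i) _ => (L + 1) ::ₛ t) ?_ ?_ ?_ ?_ ?_
  · intro s hs
    rw [Finset.mem_sym_iff]
    intro a ha
    have hmem : a ∈ s := by
      have ha' : a ∈ ((s : Multiset ℕ).erase (L + 1)) := by
        rwa [← Sym.coe_erase (Finset.mem_filter.mp hs).2]
      exact Multiset.mem_of_mem_erase ha'
    exact Finset.mem_sym_iff.mp (Finset.mem_filter.mp hs).1 a hmem
  · intro t ht
    rw [Finset.mem_filter]
    constructor
    · rw [Finset.mem_sym_iff]
      intro a ha
      rcases Sym.mem_cons.mp ha with h | h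
      · rw [h]; exact Finset.mem_range.mpr (Nat.lt_succ_self _)
      · exact Finset.mem_sym_iff.mp ht a h
    · rw [Sym.coe_cons]
      exact Multiset.mem_cons_self _ _
  · intro s hs
    exact Sym.cons_erase _
  · intro t ht
    exact Sym.erase_cons_head t (L + 1)
  · intro s hs
    show w (s : Multiset ℕ) = w ((L + 1) ::ₘ ((s : Multiset ℕ).erase (L + 1)))
    rw [Multiset.cons_erase (Finset.mem_filter.mp hs).2]

lemma w_cons (L : ℕ) (t : Multiset ℕ) :
    w ((L + 1) ::ₘ t)
      = qv ^ (L + 1) * w t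
        - yv * qv ^ (L + 1) * (if (L + 1) ∈ t then 0 else w t) := by
  by_cases h : (L + 1) ∈ t
  · rw [if_pos h, mul_zero, sub_zero, w, w, Multiset.sum_cons, pow_add]
    have ht : ((L + 1) ::ₘ t).toFinset = t.toFinset := by
      rw [Multiset.toFinset_cons, Finset.insert_eq_self.mpr (Multiset.mem_toFinset.mpr h)]
    rw [ht]; ring
  · rw [if_neg h, w, w, Multiset.sum_cons, pow_add, Multiset.toFinset_cons]
    have hnot : (L + 1) ∉ t.toFinset := fun hc => h (Multiset.mem_toFinset.mp hc)
    rw [Finset.filter_insert, if_pos (Nat.succ_pos L),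
      Finset.card_insert_of_notMem (fun hc => hnot (Finset.mem_of_mem_filter _ hc)),
      pow_succ]
    ring

lemma Hrec (L i : ℕ) :
    H (L + 1) (i + 1)
      = H L (i + 1) + qv ^ (L + 1) * H (L + 1) i - yv * qv ^ (L + 1) * H L i := by
  have hstep : ∑ t ∈ (Finset.range (L + 1 + 1)).sym i, w ((L + 1) ::ₘ (t : Multiset ℕ))
      = ∑ t ∈ (Finset.range (L + 1 + 1)).sym i,
          (qv ^ (L + 1) * w (t : Multiset ℕ)
            - yv * qv ^ (L + 1) *
              (if (L + 1) ∈ (t : Multiset ℕ) then 0 else w (t : Multiset ℕ))) :=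
    Finset.sum_congr rfl (fun t _ => w_cons L (t : Multiset ℕ))
  have hite : ∑ t ∈ (Finset.range (L + 1 + 1)).sym i,
      (if (L + 1) ∈ (t : Multiset ℕ) then (0 : MvPowerSeries (Fin 2) ℚ)
        else w (t : Multiset ℕ)) = H L i := by
    have h1 : ∑ t ∈ (Finset.range (L + 1 + 1)).sym i,
        (if (L + 1) ∈ (t : Multiset ℕ) then (0 : MvPowerSeries (Fin 2) ℚ)
          else w (t : Multiset ℕ))
        = ∑ t ∈ ((Finset.range (L + 1 + 1)).sym i).filter
            (fun t : Sym ℕ i => ¬ (L + 1) ∈ (t : Multiset ℕ)), w (t : Multiset ℕ) := by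
      rw [Finset.sum_filter]
      apply Finset.sum_congr rfl
      intro t _
      by_cases h : (L + 1) ∈ (t : Multiset ℕ) <;> simp [h]
    rw [h1, sym_filter]
    rfl
  have hH : ∑ t ∈ (Finset.range (L + 1 + 1)).sym i, w (t : Multiset ℕ) = H (L + 1) i := rfl
  rw [H_split L (i + 1), H_cons L i, hstep, Finset.sum_sub_distrib,
    ← Finset.mul_sum, ← Finset.mul_sum, hite, hH]
  ring

lemma key_lemma : ∀ L i, H L i = G L i := by
  intro L
  induction L with
  | zero => intro i; rw [H_zero_left, G_zero_left]
  | succ L ihL =>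
    intro i
    induction i with
    | zero => rw [H_zero_right, G_zero_right]
    | succ i ihi => rw [Hrec, Grec, ihL (i + 1), ihL i, ihi]

theorem alladi_berkovich (L i : ℕ) :
    ∑ s ∈ (Finset.range (L + 1)).sym i,
        (1 - yv) ^ (((s : Multiset ℕ).toFinset.filter (fun x => 0 < x)).card) *
          qv ^ ((s : Multiset ℕ).sum)
      = ∑ j ∈ Finset.range (i + 1),
          qv ^ (j * (j + 1) / 2) * (-yv) ^ j * gauss (L + i - j) i * gauss i j := by
  exact key_lemma L i
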